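/- arXiv:2209.13282 — 2 statements merged into one kernel-verified Lean document; each statement's English description precedes it below -/
import Mathlib

section
/- Let A and B be finite-dimensional unital *-algebras with a non-degenerate pairing and induced coproducts and maps S_A, S_B as above. The coproduct Δ on A is a *-map (Δ(a*) = Δ(a)* for all a) if and only if b ↦ S_B(b)* is multiplicative, i.e., S_B(bb')* = S_B(b)* S_B(b')* for all b, b' ∈ B. -/
open TensorProduct

/-- The pairing of `A ⊗ A` with the pair `(b, b')`, i.e. `x ⊗ y ↦ ⟨x,b⟩⟨y,b'⟩`. -/
noncomputable def pairTT {A B : Type*} [AddCommGroup A] [Module ℂ A]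
    [AddCommGroup B] [Module ℂ B]
    (β : A →ₗ[ℂ] B →ₗ[ℂ] ℂ) (b b' : B) : A ⊗[ℂ] A →ₗ[ℂ] ℂ :=
  (LinearMap.mul' ℂ ℂ).comp (TensorProduct.map (β.flip b) (β.flip b'))

/-- The canonical involution on `A ⊗[ℂ] A`, determined by `(x ⊗ y)* = x* ⊗ y*`. -/
noncomputable def tstar (A : Type*) [AddCommGroup A] [Module ℂ A]
    [StarAddMonoid A] [StarModule ℂ A] : A ⊗[ℂ] A →+ A ⊗[ℂ] A :=
  TensorProduct.liftAddHom
    (AddMonoidHom.mk'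
      (fun x => AddMonoidHom.mk' (fun y => star x ⊗ₜ[ℂ] star y)
        (fun y y' => by simp [star_add, TensorProduct.tmul_add]))
      (fun x x' => by
        ext y
        simp [star_add, TensorProduct.add_tmul]))
    (fun c x y => by
      simp [star_smul, TensorProduct.smul_tmul, TensorProduct.tmul_smul])

theorem pairTT_tmul {A B : Type*} [AddCommGroup A] [Module ℂ A]
    [AddCommGroup B] [Module ℂ B]
    (β : A →ₗ[ℂ] B →ₗ[ℂ] ℂ) (b b' : B) (x y : A) :
    pairTT β b b' (x ⊗ₜ[ℂ] y) = β x b * β y b' := by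
  simp [pairTT]

theorem tstar_tmul (A : Type*) [AddCommGroup A] [Module ℂ A]
    [StarAddMonoid A] [StarModule ℂ A] (x y : A) :
    tstar A (x ⊗ₜ[ℂ] y) = star x ⊗ₜ[ℂ] star y := rfl

/-- For a non-degenerate pairing of finite-dimensional unital
*-algebras `A`, `B` with induced coproduct `Δ` on `A` and map `S_B` defined by
`⟨a, (S_B b)*⟩ = conj ⟨a*, b⟩`, the coproduct `Δ` is a *-map iff
`b ↦ (S_B b)*` is multiplicative. -/
theorem coprod_star_iff_SB_star_mul
    {A B : Type*} [Ring A] [Algebra ℂ A] [StarRing A] [StarModule ℂ A]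
    [FiniteDimensional ℂ A]
    [Ring B] [Algebra ℂ B] [StarRing B] [StarModule ℂ B]
    [FiniteDimensional ℂ B]
    (β : A →ₗ[ℂ] B →ₗ[ℂ] ℂ)
    (hβA : ∀ a : A, (∀ b : B, β a b = 0) → a = 0)
    (hβB : ∀ b : B, (∀ a : A, β a b = 0) → b = 0)
    (Δ : A →ₗ[ℂ] A ⊗[ℂ] A)
    (hΔ : ∀ (a : A) (b b' : B), pairTT β b b' (Δ a) = β a (b * b'))
    (SB : B →ₗ[ℂ] B)
    (hSB : ∀ (a : A) (b : B), β a (star (SB b)) = starRingEnd ℂ (β (star a) b)) :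
    (∀ a : A, Δ (star a) = tstar A (Δ a)) ↔
      (∀ b b' : B, star (SB (b * b')) = star (SB b) * star (SB b')) := by
  -- the pairing in the other order
  have hSB' : ∀ (a : A) (b : B), β (star a) b = starRingEnd ℂ (β a (star (SB b))) := by
    intro a b
    rw [hSB a b]
    exact (Complex.conj_conj _).symm
  -- β is injective
  have hβinj : Function.Injective β := by
    intro a a' h
    have := hβA (a - a') (fun b => by
      rw [map_sub, LinearMap.sub_apply, h, sub_self])
    exact sub_eq_zero.mp this
  -- pairTT separates points of A ⊗ A
  classical
  have hsep : ∀ t : A ⊗[ℂ] A, (∀ b b' : B, pairTT β b b' t = 0) → t = 0 := by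
    have hD : ∀ (t : A ⊗[ℂ] A) (b b' : B),
        TensorProduct.dualDistrib ℂ B B (TensorProduct.map β β t) (b ⊗ₜ[ℂ] b')
          = pairTT β b b' t := by
      intro t b b'
      induction t using TensorProduct.induction_on with
      | zero => simp
      | tmul x y => simp [pairTT, TensorProduct.dualDistrib_apply]
      | add u v hu hv => simp [hu, hv]
    intro t ht
    have h0 : TensorProduct.dualDistrib ℂ B B (TensorProduct.map β β t) = 0 := by
      apply TensorProduct.ext'
      intro b b'
      rw [hD t b b', ht b b']
      rfl
    have h1 : TensorProduct.map β β t = 0 := by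
      have bB := Module.Basis.ofVectorSpace ℂ B
      have hinv := TensorProduct.dualDistrib_dualDistribInvOfBasis_right_inverse
        (R := ℂ) bB bB
      calc TensorProduct.map β β t
          = LinearMap.comp (TensorProduct.dualDistribInvOfBasis bB bB)
              (TensorProduct.dualDistrib ℂ B B) (TensorProduct.map β β t) := by
            rw [hinv]; rfl
        _ = TensorProduct.dualDistribInvOfBasis bB bB
              (TensorProduct.dualDistrib ℂ B B (TensorProduct.map β β t)) := rfl
        _ = 0 := by rw [h0, map_zero]
    have hmapinj : Function.Injective
        (TensorProduct.map β β : A ⊗[ℂ] A →ₗ[ℂ] _) := by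
      rw [← LinearMap.rTensor_comp_lTensor, LinearMap.coe_comp]
      exact Function.Injective.comp
        (Module.Flat.rTensor_preserves_injective_linearMap β hβinj)
        (Module.Flat.lTensor_preserves_injective_linearMap β hβinj)
    exact hmapinj (by rw [h1, map_zero])
  -- pairing against tstar
  have htstar : ∀ (t : A ⊗[ℂ] A) (b b' : B),
      pairTT β b b' (tstar A t)
        = starRingEnd ℂ (pairTT β (star (SB b)) (star (SB b')) t) := by
    intro t b b'
    induction t using TensorProduct.induction_on with
    | zero => simp
    | tmul x y =>
        rw [tstar_tmul, pairTT_tmul, pairTT_tmul, hSB' x b, hSB' y b', map_mul]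
    | add u v hu hv => simp [hu, hv]
  constructor
  · intro hstar b b'
    apply sub_eq_zero.mp
    apply hβB
    intro a
    rw [map_sub]
    apply sub_eq_zero.mpr
    calc β a (star (SB (b * b')))
        = starRingEnd ℂ (β (star a) (b * b')) := hSB a _
      _ = starRingEnd ℂ (pairTT β b b' (Δ (star a))) := by rw [hΔ (star a) b b']
      _ = starRingEnd ℂ (pairTT β b b' (tstar A (Δ a))) := by rw [hstar a]
      _ = starRingEnd ℂ (starRingEnd ℂ (pairTT β (star (SB b)) (star (SB b')) (Δ a))) := by
            rw [htstar]
      _ = pairTT β (star (SB b)) (star (SB b')) (Δ a) := Complex.conj_conj _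
      _ = β a (star (SB b) * star (SB b')) := hΔ a _ _
  · intro hmul a
    apply sub_eq_zero.mp
    apply hsep
    intro b b'
    rw [map_sub]
    apply sub_eq_zero.mpr
    calc pairTT β b b' (Δ (star a))
        = β (star a) (b * b') := hΔ (star a) b b'
      _ = starRingEnd ℂ (β a (star (SB (b * b')))) := hSB' a _
      _ = starRingEnd ℂ (β a (star (SB b) * star (SB b'))) := by rw [hmul b b']
      _ = starRingEnd ℂ (pairTT β (star (SB b)) (star (SB b')) (Δ a)) := by rw [hΔ a]
      _ = pairTT β b b' (tstar A (Δ a)) := (htstar (Δ a) b b').symm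
end

section
/- Let A be a finite-dimensional unital algebra with coproduct Δ admitting a counit ε, and let φ be a faithful left integral on A with antipode S satisfying S(1) = 1. Then every left invariant functional φ' on A is a scalar multiple of φ. -/
open TensorProduct

/-- `(ε ⊗ ι)` as a map `A ⊗ A → A`. -/
noncomputable def lmapC {A : Type*} [AddCommGroup A] [Module ℂ A]
    (ε : A →ₗ[ℂ] ℂ) : A ⊗[ℂ] A →ₗ[ℂ] A :=
  (TensorProduct.lid ℂ A).toLinearMap ∘ₗ TensorProduct.map ε LinearMap.id

/-- `(ι ⊗ ε)` as a map `A ⊗ A → A`. -/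
noncomputable def rmapC {A : Type*} [AddCommGroup A] [Module ℂ A]
    (ε : A →ₗ[ℂ] ℂ) : A ⊗[ℂ] A →ₗ[ℂ] A :=
  (TensorProduct.rid ℂ A).toLinearMap ∘ₗ TensorProduct.map LinearMap.id ε

lemma rmapC_tmul {A : Type*} [AddCommGroup A] [Module ℂ A]
    (f : A →ₗ[ℂ] ℂ) (x y : A) : rmapC f (x ⊗ₜ[ℂ] y) = f y • x := by
  simp [rmapC, TensorProduct.smul_tmul']

set_option maxHeartbeats 1000000 in
set_option synthInstance.maxHeartbeats 200000 in
/-- If `φ` is a faithful left integral on `A` with antipode `S`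
satisfying `S 1 = 1`, then every left invariant functional `φ'` on `A` is a scalar
multiple of `φ`. -/
theorem left_invariant_unique_up_to_scalar
    {A : Type*} [Ring A] [Algebra ℂ A] [FiniteDimensional ℂ A]
    (Δ : A →ₗ[ℂ] A ⊗[ℂ] A)
    (hcoassoc : ∀ a : A,
      (TensorProduct.assoc ℂ A A A) (TensorProduct.map Δ LinearMap.id (Δ a)) =
        TensorProduct.map LinearMap.id Δ (Δ a))
    (ε : A →ₗ[ℂ] ℂ)
    (hε₁ : ∀ a : A, lmapC ε (Δ a) = a)
    (hε₂ : ∀ a : A, rmapC ε (Δ a) = a)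
    (φ : A →ₗ[ℂ] ℂ)
    (hφ₁ : ∀ a : A, (∀ c : A, φ (a * c) = 0) → a = 0)
    (hφ₂ : ∀ c : A, (∀ a : A, φ (a * c) = 0) → c = 0)
    (S : A →ₗ[ℂ] A)
    (hS : ∀ a c : A,
      S (rmapC φ (Δ a * ((1 : A) ⊗ₜ[ℂ] c))) = rmapC φ (((1 : A) ⊗ₜ[ℂ] a) * Δ c))
    (hS1 : S 1 = 1)
    (φ' : A →ₗ[ℂ] ℂ)
    (hinv : ∀ a : A, rmapC φ' (Δ a) = φ' a • (1 : A)) :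
    ∃ c : ℂ, φ' = c • φ := by
  classical
  -- the map c ↦ φ(· * c)
  let R : A →ₗ[ℂ] Module.Dual ℂ A :=
    { toFun := fun c => φ ∘ₗ LinearMap.mulRight ℂ c
      map_add' := by intro c d; ext a; simp [mul_add]
      map_smul' := by intro r c; ext a; simp [mul_smul_comm] }
  have hRapp : ∀ c a : A, R c a = φ (a * c) := fun c a => rfl
  have hRinj : Function.Injective R := by
    rw [← LinearMap.ker_eq_bot, LinearMap.ker_eq_bot']
    intro c hc
    exact hφ₂ c fun a => by
      have := congrArg (fun f => f a) hc; simpa [hRapp] using this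
  have hRsurj : Function.Surjective R :=
    (LinearMap.injective_iff_surjective_of_finrank_eq_finrank
      (Subspace.dual_finrank_eq (K := ℂ) (V := A)).symm).mp hRinj
  obtain ⟨x, hx⟩ := hRsurj φ'
  have hx' : ∀ a : A, φ (a * x) = φ' a := fun a => by rw [← hRapp, hx]
  -- the injective map E : A ⊗ A → Hom(A, A)
  let E : A ⊗[ℂ] A →ₗ[ℂ] (A →ₗ[ℂ] A) :=
    (dualTensorHomEquiv ℂ A A).toLinearMap ∘ₗ
      (TensorProduct.comm ℂ A (Module.Dual ℂ A)).toLinearMap ∘ₗ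
      LinearMap.lTensor A R
  have hEinj : Function.Injective E := by
    refine (dualTensorHomEquiv ℂ A A).injective.comp
      ((TensorProduct.comm ℂ A (Module.Dual ℂ A)).injective.comp ?_)
    exact Module.Flat.lTensor_preserves_injective_linearMap R hRinj
  have hEapp : ∀ (w : A ⊗[ℂ] A) (a : A),
      E w a = rmapC φ (((1 : A) ⊗ₜ[ℂ] a) * w) := by
    intro w a
    induction w using TensorProduct.induction_on with
    | zero => simp only [map_zero, LinearMap.zero_apply, mul_zero]
    | tmul p q =>
        simp [E, rmapC_tmul, hRapp, Algebra.TensorProduct.tmul_mul_tmul]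
    | add u v hu hv =>
        simp only [map_add, LinearMap.add_apply, mul_add] at *
        rw [hu, hv]
  -- key computations
  have key : ∀ a : A, rmapC φ (((1 : A) ⊗ₜ[ℂ] a) * Δ x) = φ' a • (1 : A) := by
    intro a
    rw [← hS a x]
    have h1 : rmapC φ (Δ a * ((1 : A) ⊗ₜ[ℂ] x)) = rmapC φ' (Δ a) := by
      have : ∀ w : A ⊗[ℂ] A, rmapC φ (w * ((1 : A) ⊗ₜ[ℂ] x)) = rmapC φ' w := by
        intro w
        induction w using TensorProduct.induction_on with
        | zero => simp
        | tmul p q => simp [rmapC_tmul, Algebra.TensorProduct.tmul_mul_tmul, hx' ]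
        | add u v hu hv => simp only [map_add, add_mul] at *; rw [hu, hv]
      exact this (Δ a)
    rw [h1, hinv, map_smul, hS1]
  have hEzero : E (Δ x - (1 : A) ⊗ₜ[ℂ] x) = 0 := by
    ext a
    rw [LinearMap.zero_apply, hEapp, mul_sub, map_sub, key a]
    rw [Algebra.TensorProduct.tmul_mul_tmul, one_mul, rmapC_tmul, hx']
    simp
  have hΔx : Δ x = (1 : A) ⊗ₜ[ℂ] x := by
    have := hEinj (by rw [hEzero, map_zero] : E (Δ x - (1 : A) ⊗ₜ[ℂ] x) = E 0)
    exact sub_eq_zero.mp this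
  have hxval : x = ε x • (1 : A) := by
    conv_lhs => rw [← hε₂ x, hΔx, rmapC_tmul]
  refine ⟨ε x, ?_⟩
  ext a
  have hax : a * x = ε x • a := by
    conv_lhs => rw [hxval, Algebra.mul_smul_comm, mul_one]
  rw [LinearMap.smul_apply, ← hx' a, hax, map_smul, smul_eq_mul]
end
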